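/- Define the qubit map Φ : ℂ^{2×2} → ℂ^{2×2} by Φ(X) := 4X₁₁·|0⟩⟨0| + σ_x Xᵀ σ_x, where X₁₁ is the (1,1) entry of X, |0⟩⟨0| = diag(1,0), and σ_x = [[0,1],[1,0]]. Then Φ is positive but not 2-positive, tr(Φ) = 6, and nevertheless tr(Φ) ≤ 2·tr(T_G) for every orthonormal basis G of ℂ². Hence the inequality tr(Φ) ≤ d·tr(T_G) for all orthonormal bases G does not characterize 2-positivity. -/

import Mathlib

open Matrix
open scoped ComplexOrder

/-- A linear map on `d × d` complex matrices is *positive* if it sends positive semidefinite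
matrices to positive semidefinite matrices. -/
def IsPosMap {d : ℕ} (Φ : Matrix (Fin d) (Fin d) ℂ → Matrix (Fin d) (Fin d) ℂ) : Prop :=
  ∀ A : Matrix (Fin d) (Fin d) ℂ, A.PosSemidef → (Φ A).PosSemidef

/-- A map on `d × d` complex matrices is *2-positive* if it sends every positive semidefinite
`2d × 2d` block matrix `[[A, B], [C, D]]` to a positive semidefinite block matrix
`[[Φ A, Φ B], [Φ C, Φ D]]`. -/
def IsTwoPos {d : ℕ} (Φ : Matrix (Fin d) (Fin d) ℂ → Matrix (Fin d) (Fin d) ℂ) : Prop :=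
  ∀ A B C D : Matrix (Fin d) (Fin d) ℂ,
    (Matrix.fromBlocks A B C D).PosSemidef →
    (Matrix.fromBlocks (Φ A) (Φ B) (Φ C) (Φ D)).PosSemidef

/-- A map on matrices is *trace-preserving* if `tr (Φ X) = tr X` for all `X`. -/
def IsTracePreserving {d : ℕ} (Φ : Matrix (Fin d) (Fin d) ℂ → Matrix (Fin d) (Fin d) ℂ) : Prop :=
  ∀ X : Matrix (Fin d) (Fin d) ℂ, (Φ X).trace = X.trace

/-- The transition matrix `T_G` of a map `Φ` with respect to a family `g` of vectors:
`(T_G)_{jk} = ⟨g j, Φ(|g k⟩⟨g k|) (g j)⟩`. -/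
noncomputable def transMat {d : ℕ} (Φ : Matrix (Fin d) (Fin d) ℂ → Matrix (Fin d) (Fin d) ℂ)
    (g : Fin d → (Fin d → ℂ)) : Matrix (Fin d) (Fin d) ℂ :=
  Matrix.of fun j k =>
    star (g j) ⬝ᵥ (Φ (Matrix.vecMulVec (g k) (star (g k)))).mulVec (g j)

/-- The qubit map Φ(X) = 4X₁₁|0⟩⟨0| + σ_x Xᵀ σ_x is positive but not 2-positive, has tr(Φ) = 6,
and nevertheless satisfies tr(Φ) ≤ 2·tr(T_G) for every orthonormal basis G of ℂ². -/
theorem posMap_not_twoPos_satisfies_lemma (σx : Matrix (Fin 2) (Fin 2) ℂ)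
    (hσ : σx = !![0, 1; 1, 0])
    (Φ : Module.End ℂ (Matrix (Fin 2) (Fin 2) ℂ))
    (hΦ : ∀ X : Matrix (Fin 2) (Fin 2) ℂ,
      Φ X = (4 * X 0 0) • Matrix.single (0 : Fin 2) (0 : Fin 2) (1 : ℂ) +
        σx * Xᵀ * σx) :
    IsPosMap ⇑Φ ∧ ¬ IsTwoPos ⇑Φ ∧
    LinearMap.trace ℂ (Matrix (Fin 2) (Fin 2) ℂ) Φ = 6 ∧
    (∀ g : Fin 2 → (Fin 2 → ℂ),
      (∀ i j, star (g i) ⬝ᵥ g j = if i = j then (1 : ℂ) else 0) →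
      (LinearMap.trace ℂ (Matrix (Fin 2) (Fin 2) ℂ) Φ).re ≤
        2 * (transMat ⇑Φ g).trace.re) := by
  
  have std00 : Matrix.single (0:Fin 2) (0:Fin 2) (1:ℂ) = !![1,0;0,0] := by
    ext i j
    fin_cases i <;> fin_cases j <;> simp [Matrix.single]
  have hform : ∀ X : Matrix (Fin 2) (Fin 2) ℂ,
      Φ X = !![4 * X 0 0 + X 1 1, X 0 1; X 1 0, X 0 0] := by
    intro X
    rw [hΦ, hσ, Matrix.eta_fin_two Xᵀ, std00]
    ext i j
    fin_cases i <;> fin_cases j <;> simp [Matrix.mul_fin_two]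
  have htr : LinearMap.trace ℂ (Matrix (Fin 2) (Fin 2) ℂ) Φ = 6 := by
    have stdBasis_repr : ∀ (M : Matrix (Fin 2) (Fin 2) ℂ) (p : Fin 2 × Fin 2),
        (Matrix.stdBasis ℂ (Fin 2) (Fin 2)).repr M p = M p.1 p.2 := by
      intro M p
      simp [Matrix.stdBasis, Pi.basis_repr, Pi.basisFun_repr]
    rw [LinearMap.trace_eq_matrix_trace ℂ (Matrix.stdBasis ℂ (Fin 2) (Fin 2))]
    rw [Matrix.trace, Fintype.sum_prod_type]
    simp only [LinearMap.toMatrix_apply, Matrix.stdBasis_eq_single, diag_apply,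
      stdBasis_repr]
    simp [hform, Fin.sum_univ_two]
    norm_num
  refine ⟨?_, ?_, htr, ?_⟩
  · -- positivity
    intro A hA
    have happ : ∀ i j, (starRingEnd ℂ) (A j i) = A i j := fun i j => congrFun (congrFun hA.1 i) j
    refine Matrix.PosSemidef.of_dotProduct_mulVec_nonneg ?_ ?_
    · rw [hform]
      show _ = _
      ext i j
      fin_cases i <;> fin_cases j <;>
        simp [Matrix.conjTranspose_apply, happ 0 1, happ 1 0, happ 0 0, happ 1 1]
    · intro x
      have h00 : 0 ≤ A 0 0 := by
        have := hA.dotProduct_mulVec_nonneg (fun i => if i = 0 then 1 else 0)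
        simpa [dotProduct, Matrix.mulVec, Fin.sum_univ_two] using this
      have hw := hA.dotProduct_mulVec_nonneg ![star (x 1), star (x 0)]
      have key : star x ⬝ᵥ (Φ A).mulVec x
          = 4 * A 0 0 * (star (x 0) * x 0) +
            star ![star (x 1), star (x 0)] ⬝ᵥ A.mulVec ![star (x 1), star (x 0)] := by
        rw [hform]
        simp [dotProduct, Matrix.mulVec, Fin.sum_univ_two]
        ring
      rw [key]
      have h1 : 0 ≤ 4 * A 0 0 * (star (x 0) * x 0) :=
        mul_nonneg (mul_nonneg (by norm_num) h00) (star_mul_self_nonneg _)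
      exact add_nonneg h1 hw
  · -- not 2-positive
    intro h
    set w : Matrix (Fin 2 ⊕ Fin 2) (Fin 1) ℂ :=
      Matrix.of fun i _ => Sum.elim ![(1:ℂ),0] ![0,1] i with hw
    have hM : Matrix.fromBlocks !![(1:ℂ),0;0,0] !![0,1;0,0] !![0,0;1,0] !![0,0;0,1] = w * wᴴ := by
      ext i j
      rcases i with i | i <;> rcases j with j | j <;> fin_cases i <;> fin_cases j <;>
        simp [hw, Matrix.mul_apply, Matrix.fromBlocks]
    have hpsd :
        (Matrix.fromBlocks !![(1:ℂ),0;0,0] !![0,1;0,0] !![0,0;1,0] !![0,0;0,1]).PosSemidef := by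
      rw [hM]; exact Matrix.posSemidef_self_mul_conjTranspose w
    have h2 := (h _ _ _ _ hpsd).dotProduct_mulVec_nonneg (Sum.elim ![(1:ℂ),0] ![0,-3])
    rw [hform, hform, hform, hform] at h2
    norm_num [dotProduct, Matrix.mulVec, Fintype.sum_sum_type, Fin.sum_univ_two,
      Matrix.fromBlocks, Complex.le_def] at h2
  · -- trace inequality
    intro g hg
    have hnorm : ∀ j : Fin 2,
        (starRingEnd ℂ) (g j 0) * g j 0 + (starRingEnd ℂ) (g j 1) * g j 1 = 1 := by
      intro j
      have := hg j j
      simpa [dotProduct, Fin.sum_univ_two] using this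
    have ht : ∀ j : Fin 2,
        star (g j) ⬝ᵥ (Φ (Matrix.vecMulVec (g j) (star (g j)))).mulVec (g j)
        = 4 * ((starRingEnd ℂ) (g j 0) * g j 0) := by
      intro j
      rw [hform]
      have expand : star (g j) ⬝ᵥ
          (!![4 * Matrix.vecMulVec (g j) (star (g j)) 0 0 + Matrix.vecMulVec (g j) (star (g j)) 1 1,
              Matrix.vecMulVec (g j) (star (g j)) 0 1;
              Matrix.vecMulVec (g j) (star (g j)) 1 0,
              Matrix.vecMulVec (g j) (star (g j)) 0 0]).mulVec (g j)
          = 4 * ((starRingEnd ℂ) (g j 0) * g j 0) *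
            ((starRingEnd ℂ) (g j 0) * g j 0 + (starRingEnd ℂ) (g j 1) * g j 1) := by
        simp [dotProduct, Matrix.mulVec, Fin.sum_univ_two, Matrix.vecMulVec_apply]
        ring
      rw [expand, hnorm j, mul_one]
    set U : Matrix (Fin 2) (Fin 2) ℂ := Matrix.of g with hUdef
    have hU : U * Uᴴ = 1 := by
      ext i j
      have := hg j i
      simp only [dotProduct, Fin.sum_univ_two, Pi.star_apply] at this
      simp only [Matrix.mul_apply, Matrix.conjTranspose_apply, Fin.sum_univ_two, Matrix.one_apply,
        hUdef, Matrix.of_apply]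
      rw [show ∀ a b c d : ℂ, a * star b + c * star d = star b * a + star d * c from by
        intros; ring]
      rw [this]
      simp [eq_comm]
    have hU' : Uᴴ * U = 1 := mul_eq_one_comm.mp hU
    have hcol : (starRingEnd ℂ) (g 0 0) * g 0 0 + (starRingEnd ℂ) (g 1 0) * g 1 0 = 1 := by
      have := congrFun (congrFun hU' 0) 0
      simpa [Matrix.mul_apply, Matrix.conjTranspose_apply, Fin.sum_univ_two, hUdef] using this
    have htrace : (transMat ⇑Φ g).trace = 4 := by
      rw [Matrix.trace, Fin.sum_univ_two]
      simp only [Matrix.diag_apply, transMat, Matrix.of_apply, ht 0, ht 1]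
      rw [← mul_add, hcol, mul_one]
    rw [htr, htrace]
    norm_num
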